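/- arXiv:1404.5173 — 4 statements merged into one kernel-verified Lean document; each statement's English description precedes it below -/
import Mathlib

section
/- For the thick cap C = CAP_{r1,r2}(u,θ) and y with ‖y‖ = r_Y satisfying √(r1² + nD) ≤ r_Y ≤ √(r2² + nD): if x ∈ C and (1/n)‖x−y‖² ≤ D, then the angle between y and u is at most θ + arcsin(√(nD)/r_Y). -/
open Real RealInnerProductSpace

private lemma angle_triangle_aux {V : Type*} [NormedAddCommGroup V]
    [InnerProductSpace ℝ V] (y x u : V) (hx : x ≠ 0) (hy : y ≠ 0) (hu : u ≠ 0) :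
    Real.cos (InnerProductGeometry.angle y x) * Real.cos (InnerProductGeometry.angle x u)
      - Real.sin (InnerProductGeometry.angle y x) * Real.sin (InnerProductGeometry.angle x u)
      ≤ Real.cos (InnerProductGeometry.angle y u) := by
  have hX : (0:ℝ) < ‖x‖ := norm_pos_iff.2 hx
  have hY : (0:ℝ) < ‖y‖ := norm_pos_iff.2 hy
  have hU : (0:ℝ) < ‖u‖ := norm_pos_iff.2 hu
  set c1 : ℝ := ⟪y, x⟫ with hc1
  set c2 : ℝ := ⟪x, u⟫ with hc2
  set c3 : ℝ := ⟪y, u⟫ with hc3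
  set A : ℝ := ⟪y, y⟫ * ⟪x, x⟫ - c1 * c1 with hA
  set B : ℝ := ⟪x, x⟫ * ⟪u, u⟫ - c2 * c2 with hB
  have hAnn : 0 ≤ A := by
    have := real_inner_mul_inner_self_le y x
    simp only [hA]; linarith
  have hBnn : 0 ≤ B := by
    have := real_inner_mul_inner_self_le x u
    simp only [hB]; linarith
  have hXX : ⟪x, x⟫ = ‖x‖ ^ 2 := real_inner_self_eq_norm_sq x
  have hXXpos : (0:ℝ) < ⟪x, x⟫ := by rw [hXX]; positivity
  -- the key cleared inequality via Cauchy-Schwarz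
  set v : V := ⟪x, x⟫ • y - c1 • x with hv
  set w : V := ⟪x, x⟫ • u - c2 • x with hw
  have hvw : ⟪v, w⟫ = ⟪x, x⟫ * (⟪x, x⟫ * c3 - c1 * c2) := by
    simp only [hv, hw, inner_sub_left, inner_sub_right, real_inner_smul_left,
      real_inner_smul_right, hc1, hc2, hc3]
    rw [real_inner_comm x y]
    ring
  have hvv : ⟪v, v⟫ = ⟪x, x⟫ * A := by
    simp only [hv, hA, inner_sub_left, inner_sub_right, real_inner_smul_left,
      real_inner_smul_right, hc1]
    rw [real_inner_comm x y]
    ring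
  have hww : ⟪w, w⟫ = ⟪x, x⟫ * B := by
    simp only [hw, hB, inner_sub_left, inner_sub_right, real_inner_smul_left,
      real_inner_smul_right, hc2]
    rw [real_inner_comm x u]
    ring
  have hcs : -(‖v‖ * ‖w‖) ≤ ⟪v, w⟫ := neg_abs_le _ |>.trans' (by
    exact neg_le_neg (abs_real_inner_le_norm v w))
  have hnv : ‖v‖ = Real.sqrt (⟪x, x⟫) * Real.sqrt A := by
    rw [← Real.sqrt_mul hXXpos.le, ← hvv, real_inner_self_eq_norm_sq,
      Real.sqrt_sq (norm_nonneg v)]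
  have hnw : ‖w‖ = Real.sqrt (⟪x, x⟫) * Real.sqrt B := by
    rw [← Real.sqrt_mul hXXpos.le, ← hww, real_inner_self_eq_norm_sq,
      Real.sqrt_sq (norm_nonneg w)]
  have hsq : Real.sqrt (⟪x, x⟫) * Real.sqrt (⟪x, x⟫) = ⟪x, x⟫ :=
    Real.mul_self_sqrt hXXpos.le
  have star : c1 * c2 - Real.sqrt A * Real.sqrt B ≤ ⟪x, x⟫ * c3 := by
    rw [hvw, hnv, hnw] at hcs
    have : -(⟪x, x⟫ * (Real.sqrt A * Real.sqrt B)) ≤ ⟪x, x⟫ * (⟪x, x⟫ * c3 - c1 * c2) := by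
      calc -(⟪x, x⟫ * (Real.sqrt A * Real.sqrt B))
          = -(Real.sqrt (⟪x, x⟫) * Real.sqrt A * (Real.sqrt (⟪x, x⟫) * Real.sqrt B)) := by
            rw [show Real.sqrt (⟪x, x⟫) * Real.sqrt A * (Real.sqrt (⟪x, x⟫) * Real.sqrt B)
              = Real.sqrt (⟪x, x⟫) * Real.sqrt (⟪x, x⟫) * (Real.sqrt A * Real.sqrt B) by ring,
              hsq]
        _ ≤ ⟪x, x⟫ * (⟪x, x⟫ * c3 - c1 * c2) := hcs
    nlinarith [this, hXXpos]
  -- rewrite trig in terms of inner products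
  have hsina : Real.sin (InnerProductGeometry.angle y x) = Real.sqrt A / (‖y‖ * ‖x‖) := by
    rw [eq_div_iff (by positivity)]
    simpa [hA, hc1, real_inner_self_eq_norm_sq] using InnerProductGeometry.sin_angle_mul_norm_mul_norm y x
  have hsinb : Real.sin (InnerProductGeometry.angle x u) = Real.sqrt B / (‖x‖ * ‖u‖) := by
    rw [eq_div_iff (by positivity)]
    simpa [hB, hc2, real_inner_self_eq_norm_sq] using InnerProductGeometry.sin_angle_mul_norm_mul_norm x u
  rw [InnerProductGeometry.cos_angle, InnerProductGeometry.cos_angle,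
    InnerProductGeometry.cos_angle, hsina, hsinb, div_mul_div_comm, div_mul_div_comm,
    div_sub_div_same, div_le_div_iff₀ (by positivity) (by positivity), ← hc1, ← hc2, ← hc3]
  have h2 := mul_le_mul_of_nonneg_right star (mul_pos hY hU).le
  rw [hXX] at h2
  nlinarith [h2]

private lemma angle_triangle' {V : Type*} [NormedAddCommGroup V]
    [InnerProductSpace ℝ V] (y x u : V) (hx : x ≠ 0) (hy : y ≠ 0) (hu : u ≠ 0) :
    InnerProductGeometry.angle y u
      ≤ InnerProductGeometry.angle y x + InnerProductGeometry.angle x u := by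
  by_cases hpi : π ≤ InnerProductGeometry.angle y x + InnerProductGeometry.angle x u
  · exact (InnerProductGeometry.angle_le_pi y u).trans hpi
  push_neg at hpi
  by_contra hcon
  push_neg at hcon
  have h1 := angle_triangle_aux y x u hx hy hu
  rw [← Real.cos_add] at h1
  have h2 : Real.cos (InnerProductGeometry.angle y u)
      < Real.cos (InnerProductGeometry.angle y x + InnerProductGeometry.angle x u) :=
    Real.strictAntiOn_cos
      ⟨add_nonneg (InnerProductGeometry.angle_nonneg _ _) (InnerProductGeometry.angle_nonneg _ _), hpi.le⟩
      ⟨InnerProductGeometry.angle_nonneg y u, InnerProductGeometry.angle_le_pi y u⟩ hcon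
  linarith

/-- For the thick cap `CAP_{r1,r2}(u,θ)` and `y` with `‖y‖ = r_Y` satisfying
`√(r1² + nD) ≤ r_Y ≤ √(r2² + nD)`: if `x` is in the thick cap and `(1/n)‖x−y‖² ≤ D`,
then the angle between `y` and `u` is at most `θ + arcsin(√(nD)/r_Y)`. -/
theorem thick_cap_expansion_angle_middle (n : ℕ) (hn : 0 < n)
    (u : EuclideanSpace ℝ (Fin n)) (hu : u ≠ 0)
    (θ r1 r2 D rY : ℝ) (hθ : θ ∈ Set.Icc 0 (π / 2))
    (hr1 : 0 < r1) (hr12 : r1 ≤ r2) (hD : 0 < D)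
    (hlo : Real.sqrt (r1 ^ 2 + (n : ℝ) * D) ≤ rY)
    (hhi : rY ≤ Real.sqrt (r2 ^ 2 + (n : ℝ) * D))
    (x y : EuclideanSpace ℝ (Fin n)) (hy : ‖y‖ = rY)
    (hx1 : r1 ≤ ‖x‖) (hx2 : ‖x‖ ≤ r2) (hang : InnerProductGeometry.angle x u ≤ θ)
    (hd : (1 / (n : ℝ)) * ‖x - y‖ ^ 2 ≤ D) :
    InnerProductGeometry.angle y u ≤ θ + Real.arcsin (Real.sqrt ((n : ℝ) * D) / rY) := by
  have hnpos : (0:ℝ) < n := Nat.cast_pos.2 hn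
  have hnD : (0:ℝ) < (n : ℝ) * D := by positivity
  have hrY : 0 < rY :=
    lt_of_lt_of_le (Real.sqrt_pos.2 (by positivity)) hlo
  have hyne : y ≠ 0 := by
    intro h; rw [h, norm_zero] at hy; exact hrY.ne hy
  have hxne : x ≠ 0 := by
    intro h; rw [h, norm_zero] at hx1; linarith
  have hdist2 : ‖x - y‖ ^ 2 ≤ (n : ℝ) * D := by
    have h := mul_le_mul_of_nonneg_left hd hnpos.le
    rw [← mul_assoc, mul_one_div, div_self hnpos.ne', one_mul] at h
    exact h
  have hdist : ‖x - y‖ ≤ Real.sqrt ((n : ℝ) * D) :=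
    Real.le_sqrt_of_sq_le hdist2
  have hrY2 : r1 ^ 2 + (n : ℝ) * D ≤ rY ^ 2 := by
    calc r1 ^ 2 + (n : ℝ) * D = Real.sqrt (r1 ^ 2 + (n : ℝ) * D) ^ 2 := by
          rw [Real.sq_sqrt (by positivity)]
      _ ≤ rY ^ 2 := pow_le_pow_left₀ (Real.sqrt_nonneg _) hlo 2
  -- inner product of x and y is positive
  have hnsub : ‖x - y‖ ^ 2 = ‖x‖ ^ 2 - 2 * ⟪x, y⟫ + ‖y‖ ^ 2 := by
    rw [@norm_sub_sq_real]
  have hinner : 0 < ⟪x, y⟫ := by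
    have hx1' : r1 ^ 2 ≤ ‖x‖ ^ 2 := pow_le_pow_left₀ hr1.le hx1 2
    nlinarith [hnsub, hdist2, hrY2, hy]
  -- angle y x is at most π/2
  have hangle_le : InnerProductGeometry.angle y x ≤ π / 2 := by
    rw [InnerProductGeometry.angle]
    rw [Real.arccos_le_pi_div_two]
    have : (0:ℝ) ≤ ⟪y, x⟫ := by rw [real_inner_comm]; exact hinner.le
    positivity
  -- sin of angle y x bound
  have hsin : Real.sin (InnerProductGeometry.angle y x)
      ≤ Real.sqrt ((n : ℝ) * D) / rY := by
    have hkey : Real.sin (InnerProductGeometry.angle y x) * (‖y‖ * ‖x‖)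
        = Real.sqrt (⟪y, y⟫ * ⟪x, x⟫ - ⟪y, x⟫ * ⟪y, x⟫) := by
      simpa using InnerProductGeometry.sin_angle_mul_norm_mul_norm y x
    have hXpos : (0:ℝ) < ‖x‖ := lt_of_lt_of_le hr1 hx1
    have hsqle : Real.sqrt (⟪y, y⟫ * ⟪x, x⟫ - ⟪y, x⟫ * ⟪y, x⟫)
        ≤ ‖x - y‖ * ‖x‖ := by
      apply Real.sqrt_le_sqrt (le_of_eq rfl) |>.trans
      rw [show ‖x - y‖ * ‖x‖ = Real.sqrt ((‖x - y‖ * ‖x‖) ^ 2) by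
        rw [Real.sqrt_sq (by positivity)]]
      apply Real.sqrt_le_sqrt
      have hyy : ⟪y, y⟫ = ‖y‖ ^ 2 := real_inner_self_eq_norm_sq y
      have hxx : ⟪x, x⟫ = ‖x‖ ^ 2 := real_inner_self_eq_norm_sq x
      have hyx : ⟪y, x⟫ = ⟪x, y⟫ := by rw [real_inner_comm]
      nlinarith [hnsub, sq_nonneg (‖x‖ ^ 2 - ⟪x, y⟫)]
    have h1 : Real.sin (InnerProductGeometry.angle y x) * (‖y‖ * ‖x‖)
        ≤ Real.sqrt ((n : ℝ) * D) * ‖x‖ := by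
      rw [hkey]
      exact hsqle.trans (mul_le_mul_of_nonneg_right hdist (norm_pos_iff.2 hxne).le)
    rw [hy] at h1
    rw [div_eq_mul_inv]
    have := mul_le_mul_of_nonneg_right h1 (by positivity : (0:ℝ) ≤ (rY * ‖x‖)⁻¹)
    calc Real.sin (InnerProductGeometry.angle y x)
        = Real.sin (InnerProductGeometry.angle y x) * (rY * ‖x‖) * (rY * ‖x‖)⁻¹ := by
          field_simp
      _ ≤ Real.sqrt ((n : ℝ) * D) * ‖x‖ * (rY * ‖x‖)⁻¹ := this
      _ = Real.sqrt ((n : ℝ) * D) * rY⁻¹ := by field_simp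
  have hyx_le : InnerProductGeometry.angle y x
      ≤ Real.arcsin (Real.sqrt ((n : ℝ) * D) / rY) := by
    calc InnerProductGeometry.angle y x
        = Real.arcsin (Real.sin (InnerProductGeometry.angle y x)) := by
          rw [Real.arcsin_sin (by linarith [InnerProductGeometry.angle_nonneg y x,
            Real.pi_pos]) hangle_le]
      _ ≤ Real.arcsin (Real.sqrt ((n : ℝ) * D) / rY) := Real.monotone_arcsin hsin
  calc InnerProductGeometry.angle y u
      ≤ InnerProductGeometry.angle y x + InnerProductGeometry.angle x u :=
        angle_triangle' y x u hxne hyne hu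
    _ ≤ Real.arcsin (Real.sqrt ((n : ℝ) * D) / rY) + θ := add_le_add hyx_le hang
    _ = θ + Real.arcsin (Real.sqrt ((n : ℝ) * D) / rY) := by ring
end

section
/- For a thick cap C = CAP_{r1,r2}(u,θ) and y with ‖y‖ = r_Y ≤ √(r1² + nD): if there exists x ∈ C with (1/n)‖x−y‖² ≤ D, then angle(y,u) ≤ θ + arccos((r1² + r_Y² − nD)/(2 r1 r_Y)), provided the arccos argument lies in [−1,1]. -/
open Real

lemma arccos_anti {x y : ℝ} (h : x ≤ y) : Real.arccos y ≤ Real.arccos x := by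
  rw [Real.arccos_eq_pi_div_two_sub_arcsin, Real.arccos_eq_pi_div_two_sub_arcsin]
  have := Real.monotone_arcsin h
  linarith

section Triangle

variable {V : Type*} [NormedAddCommGroup V] [InnerProductSpace ℝ V]

open InnerProductGeometry RealInnerProductSpace

lemma angle_triangle_unit (a b c : V) (ha : ‖a‖ = 1) (hb : ‖b‖ = 1) (hc : ‖c‖ = 1) :
    angle a c ≤ angle a b + angle b c := by
  obtain ⟨p, hp⟩ : ∃ p : ℝ, (inner ℝ a b : ℝ) = p := ⟨_, rfl⟩
  obtain ⟨q, hq⟩ : ∃ q : ℝ, (inner ℝ b c : ℝ) = q := ⟨_, rfl⟩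
  have hp' : (inner ℝ b a : ℝ) = p := by rw [real_inner_comm]; exact hp
  have hq' : (inner ℝ c b : ℝ) = q := by rw [real_inner_comm]; exact hq
  have haa : (inner ℝ a a : ℝ) = 1 := by
    rw [real_inner_self_eq_norm_mul_norm, ha]; norm_num
  have hbb : (inner ℝ b b : ℝ) = 1 := by
    rw [real_inner_self_eq_norm_mul_norm, hb]; norm_num
  have hcc : (inner ℝ c c : ℝ) = 1 := by
    rw [real_inner_self_eq_norm_mul_norm, hc]; norm_num
  have hp1 : |p| ≤ 1 := by
    have := abs_real_inner_le_norm a b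
    rw [ha, hb, one_mul] at this; rwa [hp] at this
  have hq1 : |q| ≤ 1 := by
    have := abs_real_inner_le_norm b c
    rw [hb, hc, one_mul] at this; rwa [hq] at this
  have hab : angle a b = Real.arccos p := by
    rw [angle, ha, hb, hp]; norm_num
  have hbc : angle b c = Real.arccos q := by
    rw [angle, hb, hc, hq]; norm_num
  have hac : angle a c = Real.arccos (inner ℝ a c : ℝ) := by
    rw [angle, ha, hc]; norm_num
  by_cases hpi : Real.arccos p + Real.arccos q ≤ π
  · have hna : ‖a - p • b‖ ^ 2 = 1 - p ^ 2 := by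
      rw [← real_inner_self_eq_norm_sq]
      simp only [inner_sub_left, inner_sub_right, real_inner_smul_left, real_inner_smul_right,
        haa, hbb, hp, hp']
      ring
    have hnc : ‖c - q • b‖ ^ 2 = 1 - q ^ 2 := by
      rw [← real_inner_self_eq_norm_sq]
      simp only [inner_sub_left, inner_sub_right, real_inner_smul_left, real_inner_smul_right,
        hcc, hbb, hq, hq']
      ring
    have hinner : (inner ℝ (a - p • b) (c - q • b) : ℝ) = (inner ℝ a c : ℝ) - p * q := by
      simp only [inner_sub_left, inner_sub_right, real_inner_smul_left, real_inner_smul_right,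
        hbb, hp, hp', hq, hq']
      ring
    have hcs : -(‖a - p • b‖ * ‖c - q • b‖) ≤ (inner ℝ (a - p • b) (c - q • b) : ℝ) := by
      have h2 := abs_le.mp (abs_real_inner_le_norm (a - p • b) (c - q • b))
      linarith [h2.1]
    have hsqa : ‖a - p • b‖ = Real.sqrt (1 - p ^ 2) := by
      rw [← hna, Real.sqrt_sq (norm_nonneg _)]
    have hsqc : ‖c - q • b‖ = Real.sqrt (1 - q ^ 2) := by
      rw [← hnc, Real.sqrt_sq (norm_nonneg _)]
    have hkey : p * q - Real.sqrt (1 - p ^ 2) * Real.sqrt (1 - q ^ 2) ≤ (inner ℝ a c : ℝ) := by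
      rw [← hsqa, ← hsqc]
      linarith [hcs, hinner.le, hinner.symm.le]
    have hcosadd : Real.cos (Real.arccos p + Real.arccos q)
        = p * q - Real.sqrt (1 - p ^ 2) * Real.sqrt (1 - q ^ 2) := by
      rw [Real.cos_add, Real.cos_arccos (abs_le.mp hp1).1 (abs_le.mp hp1).2,
        Real.cos_arccos (abs_le.mp hq1).1 (abs_le.mp hq1).2,
        Real.sin_arccos, Real.sin_arccos]
    have h1 : angle a c ≤ Real.arccos (Real.cos (Real.arccos p + Real.arccos q)) := by
      rw [hac]
      apply arccos_anti
      rw [hcosadd]; exact hkey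
    rw [Real.arccos_cos (add_nonneg (Real.arccos_nonneg _) (Real.arccos_nonneg _)) hpi] at h1
    rw [hab, hbc]
    exact h1
  · push_neg at hpi
    rw [hab, hbc]
    exact le_trans (angle_le_pi a c) hpi.le

lemma angle_triangle'_s7 (x y z : V) (hx : x ≠ 0) (hy : y ≠ 0) (hz : z ≠ 0) :
    angle x z ≤ angle x y + angle y z := by
  have hnx : (0 : ℝ) < ‖x‖ := norm_pos_iff.mpr hx
  have hny : (0 : ℝ) < ‖y‖ := norm_pos_iff.mpr hy
  have hnz : (0 : ℝ) < ‖z‖ := norm_pos_iff.mpr hz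
  have ha : ‖(‖x‖⁻¹ • x : V)‖ = 1 := by
    rw [norm_smul, Real.norm_eq_abs, abs_of_pos (inv_pos.mpr hnx), inv_mul_cancel₀ hnx.ne']
  have hb : ‖(‖y‖⁻¹ • y : V)‖ = 1 := by
    rw [norm_smul, Real.norm_eq_abs, abs_of_pos (inv_pos.mpr hny), inv_mul_cancel₀ hny.ne']
  have hc : ‖(‖z‖⁻¹ • z : V)‖ = 1 := by
    rw [norm_smul, Real.norm_eq_abs, abs_of_pos (inv_pos.mpr hnz), inv_mul_cancel₀ hnz.ne']
  have := angle_triangle_unit (‖x‖⁻¹ • x) (‖y‖⁻¹ • y) (‖z‖⁻¹ • z) ha hb hc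
  rwa [angle_smul_left_of_pos _ _ (inv_pos.mpr hnx),
    angle_smul_right_of_pos _ _ (inv_pos.mpr hnz),
    angle_smul_left_of_pos _ _ (inv_pos.mpr hnx),
    angle_smul_right_of_pos _ _ (inv_pos.mpr hny),
    angle_smul_left_of_pos _ _ (inv_pos.mpr hny),
    angle_smul_right_of_pos _ _ (inv_pos.mpr hnz)] at this

end Triangle

/-- For a thick cap `CAP_{r1,r2}(u,θ)` and `y` with `‖y‖ = r_Y ≤ √(r1² + nD)`: if there
is `x` in the thick cap with `(1/n)‖x−y‖² ≤ D`, then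
`angle(y,u) ≤ θ + arccos((r1² + r_Y² − nD)/(2 r1 r_Y))`, provided the arccos argument
lies in `[−1,1]`. -/
theorem thick_cap_expansion_angle_low (n : ℕ) (hn : 0 < n)
    (u : EuclideanSpace ℝ (Fin n)) (hu : u ≠ 0)
    (θ r1 r2 D rY : ℝ) (hθ : θ ∈ Set.Icc 0 (π / 2))
    (hr1 : 0 < r1) (hr12 : r1 ≤ r2) (hD : 0 < D)
    (hhi : rY ≤ Real.sqrt (r1 ^ 2 + (n : ℝ) * D))
    (harg : |(r1 ^ 2 + rY ^ 2 - (n : ℝ) * D) / (2 * r1 * rY)| ≤ 1)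
    (y : EuclideanSpace ℝ (Fin n)) (hy : ‖y‖ = rY)
    (hex : ∃ x : EuclideanSpace ℝ (Fin n),
      r1 ≤ ‖x‖ ∧ ‖x‖ ≤ r2 ∧ InnerProductGeometry.angle x u ≤ θ ∧
        (1 / (n : ℝ)) * ‖x - y‖ ^ 2 ≤ D) :
    InnerProductGeometry.angle y u ≤
      θ + Real.arccos ((r1 ^ 2 + rY ^ 2 - (n : ℝ) * D) / (2 * r1 * rY)) := by
  obtain ⟨x, hxr1, hxr2, hxu, hxy⟩ := hex
  have hrY0 : 0 ≤ rY := hy ▸ norm_nonneg y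
  rcases eq_or_lt_of_le hrY0 with hrY | hrY
  · -- rY = 0, so y = 0
    have hy0 : y = 0 := norm_eq_zero.mp (by rw [hy, ← hrY])
    rw [hy0, InnerProductGeometry.angle_zero_left]
    have : (r1 ^ 2 + rY ^ 2 - (n : ℝ) * D) / (2 * r1 * rY) = 0 := by
      rw [← hrY]; simp
    rw [this, Real.arccos_zero]
    linarith [hθ.1]
  · -- main case rY > 0
    have hypos : (0 : ℝ) < ‖y‖ := by rw [hy]; exact hrY
    have hyne : y ≠ 0 := by
      intro h; rw [h, norm_zero] at hypos; exact lt_irrefl _ hypos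
    have hxpos : (0 : ℝ) < ‖x‖ := lt_of_lt_of_le hr1 hxr1
    have hxne : x ≠ 0 := by
      intro h; rw [h, norm_zero] at hxpos; exact lt_irrefl _ hxpos
    have hnpos : (0 : ℝ) < (n : ℝ) := Nat.cast_pos.mpr hn
    have hdist : ‖x - y‖ ^ 2 ≤ (n : ℝ) * D := by
      have h := mul_le_mul_of_nonneg_left hxy hnpos.le
      rw [← mul_assoc, mul_one_div, div_self hnpos.ne', one_mul] at h
      exact h
    have hrY2 : rY ^ 2 ≤ r1 ^ 2 + (n : ℝ) * D := by
      have h1 : rY ^ 2 ≤ (Real.sqrt (r1 ^ 2 + (n : ℝ) * D)) ^ 2 :=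
        pow_le_pow_left₀ hrY0 hhi 2
      rwa [Real.sq_sqrt (by positivity)] at h1
    -- law of cosines: inner product lower bound
    have hlaw : ‖x - y‖ ^ 2 = ‖x‖ ^ 2 - 2 * (inner ℝ x y : ℝ) + ‖y‖ ^ 2 :=
      norm_sub_sq_real x y
    have hinner : ((‖x‖ ^ 2) + rY ^ 2 - (n : ℝ) * D) / 2 ≤ (inner ℝ y x : ℝ) := by
      rw [real_inner_comm]
      rw [hy] at hlaw
      nlinarith [hdist]
    -- key comparison
    set t := ‖x‖ with ht
    have hmono : (r1 ^ 2 + rY ^ 2 - (n : ℝ) * D) / (2 * r1 * rY)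
        ≤ (t ^ 2 + rY ^ 2 - (n : ℝ) * D) / (2 * t * rY) := by
      rw [div_le_div_iff₀ (by positivity) (by positivity)]
      have h1 : 0 ≤ t - r1 := by linarith
      have h2 : 0 ≤ t * r1 - rY ^ 2 + (n : ℝ) * D := by
        nlinarith [mul_le_mul_of_nonneg_left hxr1 hr1.le]
      nlinarith [mul_nonneg (mul_nonneg h1 h2) hrY.le]
    have hangle_xy : InnerProductGeometry.angle y x
        ≤ Real.arccos ((r1 ^ 2 + rY ^ 2 - (n : ℝ) * D) / (2 * r1 * rY)) := by
      rw [InnerProductGeometry.angle]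
      apply arccos_anti
      calc (r1 ^ 2 + rY ^ 2 - (n : ℝ) * D) / (2 * r1 * rY)
          ≤ (t ^ 2 + rY ^ 2 - (n : ℝ) * D) / (2 * t * rY) := hmono
        _ ≤ (inner ℝ y x : ℝ) / (‖y‖ * ‖x‖) := by
            rw [hy, ← ht]
            rw [div_le_div_iff₀ (by positivity) (by positivity)]
            calc (t ^ 2 + rY ^ 2 - (n : ℝ) * D) * (rY * t)
                = ((t ^ 2 + rY ^ 2 - (n : ℝ) * D) / 2) * (2 * t * rY) := by ring
              _ ≤ (inner ℝ y x : ℝ) * (2 * t * rY) := by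
                  apply mul_le_mul_of_nonneg_right hinner (by positivity)
    have htri := angle_triangle'_s7 y x u hyne hxne hu
    calc InnerProductGeometry.angle y u
        ≤ InnerProductGeometry.angle y x + InnerProductGeometry.angle x u := htri
      _ ≤ Real.arccos ((r1 ^ 2 + rY ^ 2 - (n : ℝ) * D) / (2 * r1 * rY)) + θ := by
          exact add_le_add hangle_xy hxu
      _ = θ + Real.arccos ((r1 ^ 2 + rY ^ 2 - (n : ℝ) * D) / (2 * r1 * rY)) := by ring
end

section
/- Let p_1,...,p_M ≥ 0 sum to 1, let Ω* ∈ (0,1), c ∈ (0,1), let F : [0,1] → [0,1] be nondecreasing, and let p* ∈ (0,1) satisfy F(p*) = Ω*. If Σ_i p_i F(p_i) ≤ c·Ω*, then M ≥ (1−c)/p*. -/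
/-- Abstract form of Lemma 4 of the converse: if `p_1,…,p_M ≥ 0` sum to 1,
`Ω* ∈ (0,1)`, `c ∈ (0,1)`, `F : [0,1] → [0,1]` is nondecreasing, `p* ∈ (0,1)` satisfies
`F(p*) = Ω*`, and `Σ_i p_i F(p_i) ≤ c·Ω*`, then `M ≥ (1−c)/p*`. -/
theorem converse_counting_lemma (M : ℕ) (p : Fin M → ℝ)
    (hp : ∀ i, 0 ≤ p i) (hsum : ∑ i, p i = 1)
    (Ωstar c pstar : ℝ) (hΩ : Ωstar ∈ Set.Ioo (0:ℝ) 1) (hc : c ∈ Set.Ioo (0:ℝ) 1)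
    (F : ℝ → ℝ) (hFmono : MonotoneOn F (Set.Icc 0 1))
    (hFrange : ∀ x ∈ Set.Icc (0:ℝ) 1, F x ∈ Set.Icc (0:ℝ) 1)
    (hpstar : pstar ∈ Set.Ioo (0:ℝ) 1) (hFp : F pstar = Ωstar)
    (hle : ∑ i, p i * F (p i) ≤ c * Ωstar) :
    (M : ℝ) ≥ (1 - c) / pstar := by
  obtain ⟨hΩ0, hΩ1⟩ := hΩ
  obtain ⟨hc0, hc1⟩ := hc
  obtain ⟨hps0, hps1⟩ := hpstar
  have hple1 : ∀ i, p i ≤ 1 := fun i =>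
    hsum ▸ Finset.single_le_sum (fun j _ => hp j) (Finset.mem_univ i)
  set T := Finset.univ.filter (fun i => pstar ≤ p i) with hTdef
  have hT : ∀ i ∈ T, Ωstar ≤ F (p i) := by
    intro i hi
    rw [← hFp]
    exact hFmono ⟨le_of_lt hps0, le_of_lt hps1⟩ ⟨hp i, hple1 i⟩
      ((Finset.mem_filter.mp hi).2)
  have hsumT : Ωstar * ∑ i ∈ T, p i ≤ c * Ωstar := by
    calc Ωstar * ∑ i ∈ T, p i = ∑ i ∈ T, p i * Ωstar := by
          rw [Finset.mul_sum]; exact Finset.sum_congr rfl (fun i _ => mul_comm _ _)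
      _ ≤ ∑ i ∈ T, p i * F (p i) :=
          Finset.sum_le_sum (fun i hi => mul_le_mul_of_nonneg_left (hT i hi) (hp i))
      _ ≤ ∑ i, p i * F (p i) :=
          Finset.sum_le_sum_of_subset_of_nonneg (Finset.filter_subset _ _)
            (fun i _ _ => mul_nonneg (hp i) (hFrange (p i) ⟨hp i, hple1 i⟩).1)
      _ ≤ c * Ωstar := hle
  have hTle : ∑ i ∈ T, p i ≤ c := by nlinarith
  have hS : (1 - c) ≤ ∑ i ∈ Tᶜ, p i := by
    have h := Finset.sum_add_sum_compl T p
    rw [hsum] at h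
    linarith
  have hScard : ∑ i ∈ Tᶜ, p i ≤ (Tᶜ.card : ℝ) * pstar := by
    calc ∑ i ∈ Tᶜ, p i ≤ ∑ _i ∈ Tᶜ, pstar := by
          refine Finset.sum_le_sum (fun i hi => ?_)
          have : ¬ pstar ≤ p i := by
            simpa [hTdef] using Finset.mem_compl.mp hi
          linarith
      _ = (Tᶜ.card : ℝ) * pstar := by rw [Finset.sum_const, nsmul_eq_mul]
  have hcard : (Tᶜ.card : ℝ) ≤ M := by
    have := Finset.card_le_univ (Tᶜ)
    simpa using (Nat.cast_le (α := ℝ)).mpr this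
  rw [ge_iff_le, div_le_iff₀ hps0]
  nlinarith
end

section
/- Let s ∈ R^n be a point on the unit sphere lying in annulus A_i, and let y = h_i(s) be its image under the annulus mapping. Then ‖y‖ = cos(α_i) − 2 sin(|arcsin(s_n) − α_i|/2), where s_n is the last coordinate of s. -/
open Real

set_option maxHeartbeats 1000000

private lemma normsq_eu {k : ℕ} (x : EuclideanSpace ℝ (Fin k)) : ‖x‖^2 = ∑ i, (x i)^2 := by
  rw [EuclideanSpace.norm_eq, Real.sq_sqrt (by positivity)]
  simp [sq_abs]

private lemma inner_eu {k : ℕ} (x z : EuclideanSpace ℝ (Fin k)) :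
    (inner ℝ x z : ℝ) = ∑ i, x i * z i := by
  simp [PiLp.inner_apply, RCLike.inner_apply, mul_comm]

private lemma eq_of_sq_eq {a b : ℝ} (h : a^2 = b^2) (ha : 0 ≤ a) (hb : 0 ≤ b) : a = b := by
  nlinarith [sq_nonneg (a - b), sq_nonneg (a + b)]

/-- Norm of the annulus mapping: if `s` is a unit vector in annulus `A_i`
(with `α_i ≥ 0`), `p = P_i(s)` is the closest point to `s` on the unit sphere with last
coordinate `sin α_i`, the positive part in `h_i` is not active, and
`y = h_i(s) = (s'/‖s'‖)(cos α_i − ‖p − s‖)` (where `s'` drops the last coordinate), then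
`‖y‖ = cos α_i − 2 sin(|arcsin s_n − α_i|/2)`. -/
theorem norm_of_annulus_mapping (n : ℕ) (hn : 1 < n) (αi αi1 : ℝ)
    (hαi : 0 ≤ αi) (hαlt : αi < αi1)
    (s : EuclideanSpace ℝ (Fin n)) (hs : ‖s‖ = 1)
    (sn : ℝ) (hsn : sn = s ⟨n - 1, by omega⟩)
    (hann1 : αi ≤ Real.arcsin sn) (hann2 : Real.arcsin sn < αi1)
    (p : EuclideanSpace ℝ (Fin n)) (hp : ‖p‖ = 1)
    (hpn : p ⟨n - 1, by omega⟩ = Real.sin αi)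
    (hmin : ∀ z : EuclideanSpace ℝ (Fin n), ‖z‖ = 1 → z ⟨n - 1, by omega⟩ = Real.sin αi →
      ‖s - p‖ ≤ ‖s - z‖)
    (s' : EuclideanSpace ℝ (Fin (n - 1)))
    (hs' : s' = fun j : Fin (n - 1) => s (Fin.castLE (Nat.sub_le n 1) j))
    (hs'ne : s' ≠ 0)
    (hpos : 0 ≤ Real.cos αi - ‖p - s‖)
    (y : EuclideanSpace ℝ (Fin (n - 1)))
    (hy : y = ((Real.cos αi - ‖p - s‖) / ‖s'‖) • s') :
    ‖y‖ = Real.cos αi - 2 * Real.sin (|Real.arcsin sn - αi| / 2) := by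
  obtain ⟨m, rfl⟩ : ∃ m, n = m + 1 := ⟨n - 1, by omega⟩
  set β := Real.arcsin sn with hβ
  have hlast : (⟨m + 1 - 1, by omega⟩ : Fin (m + 1)) = Fin.last m := by
    ext; simp
  have hcast : ∀ j : Fin (m + 1 - 1), (Fin.castLE (Nat.sub_le (m+1) 1) j : Fin (m+1))
      = Fin.castSucc ⟨j.1, by omega⟩ := by
    intro j; ext; simp
  -- basic bounds on sn
  have hssq : ∑ i, (s i)^2 = 1 := by
    have := normsq_eu s; rw [hs] at this; linarith
  have hsnlast : sn = s (Fin.last m) := by rw [hsn, hlast]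
  have hsn1 : sn^2 ≤ 1 := by
    rw [hsnlast]
    calc (s (Fin.last m))^2 ≤ ∑ i, (s i)^2 :=
          Finset.single_le_sum (f := fun i => (s i)^2) (fun i _ => sq_nonneg _) (Finset.mem_univ _)
      _ = 1 := hssq
  have hsnlb : -1 ≤ sn := by nlinarith
  have hsnub : sn ≤ 1 := by nlinarith
  have hsinβ : Real.sin β = sn := Real.sin_arcsin hsnlb hsnub
  have hβle : β ≤ π / 2 := Real.arcsin_le_pi_div_two sn
  have hβnn : 0 ≤ β := le_trans hαi hann1
  have hαile : αi ≤ π / 2 := le_trans hann1 hβle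
  have hcosαi : 0 ≤ Real.cos αi := Real.cos_nonneg_of_mem_Icc ⟨by linarith [Real.pi_pos], hαile⟩
  -- norm of s'
  have hs'sq : ‖s'‖^2 = 1 - sn^2 := by
    rw [normsq_eu, hs']
    have heq : ∑ j : Fin (m + 1 - 1), (s (Fin.castLE (Nat.sub_le (m+1) 1) j))^2
        = ∑ j : Fin m, (s (Fin.castSucc j))^2 := rfl
    rw [heq]
    have := Fin.sum_univ_castSucc (f := fun i => (s i)^2)
    rw [this] at hssq
    rw [hsnlast]
    linarith
  have hcosβ : Real.cos β = ‖s'‖ := by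
    apply eq_of_sq_eq _ (Real.cos_nonneg_of_mem_Icc ⟨by linarith [Real.pi_pos], hβle⟩) (norm_nonneg _)
    rw [hs'sq, ← hsinβ]
    nlinarith [Real.sin_sq_add_cos_sq β]
  have hs'pos : 0 < ‖s'‖ := norm_pos_iff.mpr hs'ne
  have hcosβpos : 0 < Real.cos β := hcosβ ▸ hs'pos
  have hsum_s : ∑ j : Fin m, (s (Fin.castSucc j))^2 = 1 - sn^2 := by
    have h := Fin.sum_univ_castSucc (f := fun i => (s i)^2)
    rw [h] at hssq
    rw [hsnlast]
    linarith
  have hcos2 : Real.cos β ^ 2 = 1 - sn^2 := by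
    rw [← hsinβ]; linarith [Real.sin_sq_add_cos_sq β]
  -- the comparison point z
  set c : ℝ := Real.cos αi / Real.cos β with hc
  set z : EuclideanSpace ℝ (Fin (m+1)) :=
    WithLp.toLp 2 (Fin.snoc (fun j : Fin m => c * s (Fin.castSucc j)) (Real.sin αi) : Fin (m+1) → ℝ) with hz
  have hzlast : z (Fin.last m) = Real.sin αi := by
    show Fin.snoc (α := fun _ => ℝ) (fun j : Fin m => c * s (Fin.castSucc j)) (Real.sin αi) (Fin.last m) = _
    exact Fin.snoc_last _ _
  have hzcast : ∀ j : Fin m, z (Fin.castSucc j) = c * s (Fin.castSucc j) := fun j => by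
    show Fin.snoc (α := fun _ => ℝ) (fun j : Fin m => c * s (Fin.castSucc j)) (Real.sin αi) (Fin.castSucc j) = _
    exact Fin.snoc_castSucc _ _ _
  have hznorm : ‖z‖ = 1 := by
    apply eq_of_sq_eq _ (norm_nonneg _) zero_le_one
    rw [normsq_eu, Fin.sum_univ_castSucc]
    simp only [hzcast, hzlast, mul_pow, one_pow]
    rw [← Finset.mul_sum, hsum_s, ← hcos2, hc]
    field_simp
    exact Real.cos_sq_add_sin_sq αi
  -- inner products
  have hinner_sz : (inner ℝ s z : ℝ) = Real.cos (β - αi) := by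
    rw [inner_eu, Fin.sum_univ_castSucc]
    simp only [hzcast, hzlast, ← hsnlast]
    have : ∑ j : Fin m, s (Fin.castSucc j) * (c * s (Fin.castSucc j))
        = c * ∑ j : Fin m, (s (Fin.castSucc j))^2 := by
      rw [Finset.mul_sum]; congr 1; ext j; ring
    rw [this, hsum_s, ← hcos2, Real.cos_sub, ← hsinβ, hc]
    field_simp
  -- distance to z
  have hdist_z : ‖s - z‖^2 = 2 - 2 * Real.cos (β - αi) := by
    rw [@norm_sub_sq_real, hs, hznorm, hinner_sz]; ring
  -- lower bound for ‖s - p‖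
  have hpsq : ∑ i, (p i)^2 = 1 := by
    have := normsq_eu p; rw [hp] at this; linarith
  have hplast : p (Fin.last m) = Real.sin αi := by rw [← hlast, hpn]
  have hsum_p : ∑ j : Fin m, (p (Fin.castSucc j))^2 = Real.cos αi ^ 2 := by
    have := Fin.sum_univ_castSucc (f := fun i => (p i)^2)
    rw [this, hplast] at hpsq
    nlinarith [Real.sin_sq_add_cos_sq αi]
  have hCS : ∑ j : Fin m, s (Fin.castSucc j) * p (Fin.castSucc j)
      ≤ Real.cos β * Real.cos αi := by
    set sv : EuclideanSpace ℝ (Fin m) := WithLp.toLp 2 (fun j => s (Fin.castSucc j)) with hsv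
    set pv : EuclideanSpace ℝ (Fin m) := WithLp.toLp 2 (fun j => p (Fin.castSucc j)) with hpv
    have h1 : (inner ℝ sv pv : ℝ) = ∑ j : Fin m, s (Fin.castSucc j) * p (Fin.castSucc j) :=
      inner_eu sv pv
    have h2 : ‖sv‖ = Real.cos β := by
      apply (eq_of_sq_eq _ (Real.cos_nonneg_of_mem_Icc ⟨by linarith [Real.pi_pos], hβle⟩)
        (norm_nonneg _)).symm
      rw [normsq_eu, hcos2]; exact hsum_s.symm
    have h3 : ‖pv‖ = Real.cos αi := by
      apply (eq_of_sq_eq _ hcosαi (norm_nonneg _)).symm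
      rw [normsq_eu, hsum_p]
    calc ∑ j : Fin m, s (Fin.castSucc j) * p (Fin.castSucc j) = (inner ℝ sv pv : ℝ) := h1.symm
      _ ≤ ‖sv‖ * ‖pv‖ := real_inner_le_norm sv pv
      _ = Real.cos β * Real.cos αi := by rw [h2, h3]
  have hinner_sp : (inner ℝ s p : ℝ) ≤ Real.cos (β - αi) := by
    rw [inner_eu, Fin.sum_univ_castSucc, ← hsnlast, hplast, Real.cos_sub, ← hsinβ]
    nlinarith
  have hdist_p_lb : 2 - 2 * Real.cos (β - αi) ≤ ‖s - p‖^2 := by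
    rw [@norm_sub_sq_real, hs, hp]
    linarith [hinner_sp]
  -- combine with minimality
  have hmin' : ‖s - p‖ ≤ ‖s - z‖ := hmin z hznorm hzlast
  have hdist_p : ‖s - p‖^2 = 2 - 2 * Real.cos (β - αi) := by
    have h1 : ‖s - p‖^2 ≤ ‖s - z‖^2 := pow_le_pow_left₀ (norm_nonneg _) hmin' 2
    rw [hdist_z] at h1
    linarith
  -- chord length formula
  have hβα : 0 ≤ β - αi := by linarith
  have habs : |β - αi| = β - αi := abs_of_nonneg hβα
  have hsin_nn : 0 ≤ Real.sin ((β - αi) / 2) := by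
    apply Real.sin_nonneg_of_nonneg_of_le_pi (by linarith)
    have : β - αi ≤ π / 2 := by linarith
    linarith [Real.pi_pos]
  have hchord : ‖p - s‖ = 2 * Real.sin ((β - αi) / 2) := by
    rw [norm_sub_rev]
    apply eq_of_sq_eq _ (norm_nonneg _) (by linarith)
    rw [hdist_p]
    have h2 : Real.sin ((β - αi) / 2) ^ 2 = 1 / 2 - Real.cos (2 * ((β - αi) / 2)) / 2 :=
      Real.sin_sq_eq_half_sub _
    have h3 : 2 * ((β - αi) / 2) = β - αi := by ring
    rw [h3] at h2
    linear_combination (-4 : ℝ) * h2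
  -- finish
  rw [hy, norm_smul, Real.norm_eq_abs, abs_of_nonneg (by positivity),
    div_mul_cancel₀ _ (ne_of_gt hs'pos), hchord, habs]
end
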